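/- Let a > 0, let f ∈ C⁰([0,1]) and g ∈ C¹([0,1]), fix an integer m ≥ 1 and a time t > 0. For ε > 0 let k = k(ε) = ⌊1/(2 a π ε)⌋ and n = k + m, and define β_n = √(4 a² n² ε² π² − 1)/(2ε), c_n = 2∫₀¹ f(x) sin(n π x) dx, d_n = (4ε/√(4 a² n² ε² π² − 1)) ∫₀¹ (f(x)/(2ε) − g'(x)) sin(n π x) dx, and A_n(t) = e^{−t/(2ε)} (c_n cos(β_n t) + d_n sin(β_n t)). Then A_{k(ε)+m}(t) → 0 as ε → 0⁺. -/

import Mathlib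

open Set Real Filter

/-- In the case `b = 0`, for a fixed `m ≥ 1` and a fixed time `t > 0`, the amplitude
`A_{k(ε)+m}(t) = e^{−t/(2ε)} (c_n cos(β_n t) + d_n sin(β_n t))` of the oscillatory mode
`n = k(ε) + m`, with `k(ε) = ⌊1/(2aπε)⌋`, tends to `0` as `ε → 0⁺`. -/
theorem oscillatory_mode_amplitude_limit
    (a : ℝ) (ha : 0 < a) (f g : ℝ → ℝ)
    (hf : ContinuousOn f (Icc 0 1)) (hg : ContDiffOn ℝ 1 g (Icc 0 1))
    (m : ℕ) (hm : 1 ≤ m) (t : ℝ) (ht : 0 < t) :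
    Filter.Tendsto (fun ε : ℝ =>
      Real.exp (-t / (2 * ε)) *
        ((2 * ∫ x in (0:ℝ)..1, f x *
              Real.sin (((⌊1 / (2 * a * π * ε)⌋₊ + m : ℕ) : ℝ) * π * x)) *
            Real.cos (Real.sqrt (4 * a ^ 2 * ((⌊1 / (2 * a * π * ε)⌋₊ + m : ℕ) : ℝ) ^ 2
              * ε ^ 2 * π ^ 2 - 1) / (2 * ε) * t)
          + ((4 * ε / Real.sqrt (4 * a ^ 2 * ((⌊1 / (2 * a * π * ε)⌋₊ + m : ℕ) : ℝ) ^ 2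
                * ε ^ 2 * π ^ 2 - 1)) *
              ∫ x in (0:ℝ)..1, (f x / (2 * ε) - deriv g x) *
                Real.sin (((⌊1 / (2 * a * π * ε)⌋₊ + m : ℕ) : ℝ) * π * x)) *
            Real.sin (Real.sqrt (4 * a ^ 2 * ((⌊1 / (2 * a * π * ε)⌋₊ + m : ℕ) : ℝ) ^ 2
              * ε ^ 2 * π ^ 2 - 1) / (2 * ε) * t)))
      (nhdsWithin 0 (Set.Ioi 0)) (nhds 0) := by
  -- bounds for f and deriv g
  obtain ⟨M₀, hM₀⟩ := isCompact_Icc.exists_bound_of_continuousOn hf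
  set M : ℝ := max M₀ 0 with hMdef
  have hM : ∀ x ∈ Icc (0:ℝ) 1, |f x| ≤ M := fun x hx => (hM₀ x hx).trans (le_max_left _ _)
  have hM0 : (0:ℝ) ≤ M := le_max_right _ _
  have hUD : UniqueDiffOn ℝ (Icc (0:ℝ) 1) := uniqueDiffOn_Icc one_pos
  have hg' : ContinuousOn (derivWithin g (Icc 0 1)) (Icc (0:ℝ) 1) :=
    hg.continuousOn_derivWithin hUD le_rfl
  obtain ⟨G₀, hG₀⟩ := isCompact_Icc.exists_bound_of_continuousOn hg'
  set G : ℝ := max G₀ 0 with hGdef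
  have hG : ∀ x ∈ Icc (0:ℝ) 1, |derivWithin g (Icc 0 1) x| ≤ G :=
    fun x hx => (hG₀ x hx).trans (le_max_left _ _)
  have hG0 : (0:ℝ) ≤ G := le_max_right _ _
  -- the squeezing function
  apply squeeze_zero_norm'
    (a := fun ε : ℝ => Real.exp (-(t / (2 * ε))) *
      (2 * M + 2 * t * G + 2 * M * (t / (2 * ε))))
  · -- eventual bound
    filter_upwards [self_mem_nhdsWithin] with ε (hε : ε ∈ Ioi (0:ℝ))
    have hεpos : (0:ℝ) < ε := hε
    set N : ℝ := ((⌊1 / (2 * a * π * ε)⌋₊ + m : ℕ) : ℝ) with hNdef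
    have hc : (0:ℝ) < 2 * a * π * ε := by positivity
    have hxN : 1 / (2 * a * π * ε) < N := by
      have h1 : 1 / (2 * a * π * ε) < (⌊1 / (2 * a * π * ε)⌋₊ : ℝ) + 1 :=
        Nat.lt_floor_add_one _
      have h2 : ((⌊1 / (2 * a * π * ε)⌋₊ : ℝ) + 1) ≤ N := by
        rw [hNdef]; push_cast
        have : (1:ℝ) ≤ (m : ℝ) := by exact_mod_cast hm
        linarith
      linarith
    have hN1 : 1 < 2 * a * π * ε * N := by
      have h := (div_lt_iff₀ hc).mp hxN
      nlinarith
    have hΔ : 0 < 4 * a ^ 2 * N ^ 2 * ε ^ 2 * π ^ 2 - 1 := by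
      nlinarith [sq_nonneg (2 * a * π * ε * N - 1)]
    set Δ : ℝ := 4 * a ^ 2 * N ^ 2 * ε ^ 2 * π ^ 2 - 1 with hΔdef
    have hs : 0 < Real.sqrt Δ := Real.sqrt_pos.mpr hΔ
    set θ : ℝ := Real.sqrt Δ / (2 * ε) * t with hθdef
    have hθ0 : 0 ≤ θ := by positivity
    -- integral bounds
    set I₁ : ℝ := ∫ x in (0:ℝ)..1, f x * Real.sin (N * π * x) with hI₁def
    set I₂ : ℝ := ∫ x in (0:ℝ)..1, (f x / (2 * ε) - deriv g x) * Real.sin (N * π * x)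
      with hI₂def
    have hI₁ : |I₁| ≤ M := by
      have h := intervalIntegral.norm_integral_le_of_norm_le_const
        (a := (0:ℝ)) (b := 1) (C := M) (f := fun x => f x * Real.sin (N * π * x)) ?_
      · simpa [hI₁def] using h
      · intro x hx
        rw [Set.uIoc_of_le (by norm_num : (0:ℝ) ≤ 1)] at hx
        have hx' : x ∈ Icc (0:ℝ) 1 := Ioc_subset_Icc_self hx
        rw [Real.norm_eq_abs, abs_mul]
        calc |f x| * |Real.sin (N * π * x)| ≤ M * 1 :=
              mul_le_mul (hM x hx') (Real.abs_sin_le_one _) (abs_nonneg _) hM0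
          _ = M := mul_one M
    have hI₂ : |I₂| ≤ M / (2 * ε) + G := by
      have h := intervalIntegral.norm_integral_le_of_norm_le_const_ae
        (a := (0:ℝ)) (b := 1) (C := M / (2 * ε) + G)
        (f := fun x => (f x / (2 * ε) - deriv g x) * Real.sin (N * π * x)) ?_
      · simpa [hI₂def] using h
      · have h1 : ∀ᵐ x : ℝ, x ≠ 1 := by
          refine MeasureTheory.ae_iff.mpr ?_
          simp [MeasureTheory.measure_singleton]
        filter_upwards [h1] with x hx1 hx
        rw [Set.uIoc_of_le (by norm_num : (0:ℝ) ≤ 1)] at hx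
        have hxo : x ∈ Ioo (0:ℝ) 1 := ⟨hx.1, lt_of_le_of_ne hx.2 hx1⟩
        have hx' : x ∈ Icc (0:ℝ) 1 := Ioo_subset_Icc_self hxo
        have hd : deriv g x = derivWithin g (Icc 0 1) x := by
          rw [derivWithin_of_mem_nhds (Icc_mem_nhds hxo.1 hxo.2)]
        rw [Real.norm_eq_abs, abs_mul, hd]
        have hstep : |f x / (2 * ε) - derivWithin g (Icc 0 1) x| ≤ M / (2 * ε) + G := by
          have := abs_sub (f x / (2 * ε)) (derivWithin g (Icc 0 1) x)
          have habs : |f x / (2 * ε)| = |f x| / (2 * ε) := by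
            rw [abs_div, abs_of_pos (by positivity : (0:ℝ) < 2 * ε)]
          have h2 : |f x| / (2 * ε) ≤ M / (2 * ε) := by
            gcongr
            exact hM x hx'
          calc |f x / (2 * ε) - derivWithin g (Icc 0 1) x|
              ≤ |f x / (2 * ε)| + |derivWithin g (Icc 0 1) x| := abs_sub _ _
            _ ≤ M / (2 * ε) + G := by rw [habs]; exact add_le_add h2 (hG x hx')
        calc |f x / (2 * ε) - derivWithin g (Icc 0 1) x| * |Real.sin (N * π * x)|
            ≤ (M / (2 * ε) + G) * 1 :=
              mul_le_mul hstep (Real.abs_sin_le_one _) (abs_nonneg _) (by positivity)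
          _ = M / (2 * ε) + G := mul_one _
    -- main estimate
    show ‖Real.exp (-t / (2 * ε)) * (2 * I₁ * Real.cos θ + 4 * ε / Real.sqrt Δ * I₂ * Real.sin θ)‖
        ≤ _
    rw [Real.norm_eq_abs, abs_mul, Real.abs_exp, neg_div]
    apply mul_le_mul_of_nonneg_left _ (Real.exp_nonneg _)
    have hsin : |Real.sin θ| ≤ θ := by
      calc |Real.sin θ| ≤ |θ| := Real.abs_sin_le_abs
        _ = θ := abs_of_nonneg hθ0
    have hterm2 : |4 * ε / Real.sqrt Δ * I₂ * Real.sin θ| ≤ 2 * t * G + 2 * M * (t / (2 * ε)) := by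
      rw [abs_mul, abs_mul]
      have h4 : |4 * ε / Real.sqrt Δ| = 4 * ε / Real.sqrt Δ := abs_of_pos (by positivity)
      rw [h4]
      have hb : 4 * ε / Real.sqrt Δ * |I₂| * |Real.sin θ|
          ≤ 4 * ε / Real.sqrt Δ * (M / (2 * ε) + G) * θ := by
        apply mul_le_mul _ hsin (abs_nonneg _) (by positivity)
        exact mul_le_mul_of_nonneg_left hI₂ (by positivity)
      refine hb.trans (le_of_eq ?_)
      rw [hθdef]
      field_simp
      ring
    have hterm1 : |2 * I₁ * Real.cos θ| ≤ 2 * M := by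
      rw [abs_mul, abs_mul]
      calc |2| * |I₁| * |Real.cos θ| ≤ 2 * M * 1 := by
            apply mul_le_mul _ (Real.abs_cos_le_one _) (abs_nonneg _) (by positivity)
            rw [abs_two]
            exact mul_le_mul_of_nonneg_left hI₁ (by norm_num)
        _ = 2 * M := mul_one _
    calc |2 * I₁ * Real.cos θ + 4 * ε / Real.sqrt Δ * I₂ * Real.sin θ|
        ≤ |2 * I₁ * Real.cos θ| + |4 * ε / Real.sqrt Δ * I₂ * Real.sin θ| := abs_add_le _ _
      _ ≤ 2 * M + (2 * t * G + 2 * M * (t / (2 * ε))) := add_le_add hterm1 hterm2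
      _ = 2 * M + 2 * t * G + 2 * M * (t / (2 * ε)) := by ring
  · -- the squeezing function tends to 0
    have hu : Tendsto (fun ε : ℝ => t / (2 * ε)) (nhdsWithin 0 (Set.Ioi 0)) atTop := by
      have h1 : Tendsto (fun ε : ℝ => ε⁻¹) (nhdsWithin 0 (Set.Ioi 0)) atTop :=
        tendsto_inv_nhdsGT_zero
      have h2 := h1.const_mul_atTop (show (0:ℝ) < t / 2 by linarith)
      refine h2.congr fun ε => by ring
    have hexp : Tendsto (fun ε : ℝ => Real.exp (-(t / (2 * ε))))
        (nhdsWithin 0 (Set.Ioi 0)) (nhds 0) :=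
      Real.tendsto_exp_atBot.comp ((tendsto_neg_atTop_atBot).comp hu)
    have hue : Tendsto (fun ε : ℝ => (t / (2 * ε)) * Real.exp (-(t / (2 * ε))))
        (nhdsWithin 0 (Set.Ioi 0)) (nhds 0) := by
      have h := (Real.tendsto_pow_mul_exp_neg_atTop_nhds_zero 1).comp hu
      simpa [Function.comp_def] using h
    have : Tendsto (fun ε : ℝ => (2 * M + 2 * t * G) * Real.exp (-(t / (2 * ε)))
        + 2 * M * ((t / (2 * ε)) * Real.exp (-(t / (2 * ε)))))
        (nhdsWithin 0 (Set.Ioi 0)) (nhds 0) := by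
      have := (hexp.const_mul (2 * M + 2 * t * G)).add (hue.const_mul (2 * M))
      simpa using this
    refine this.congr fun ε => by ring
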